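/- arXiv:1911.08055 — 2 statements merged into one kernel-verified Lean document; each statement's English description precedes it below -/
import Mathlib

section
/- Let R be a commutative ring, A and B be R-modules annihilated by a ∈ R and b ∈ R respectively, and suppose f·a + g·b = c for some f, g ∈ R and a nonzero integer c (R being a Z-algebra). Let N be an R-module that is torsion-free over Z and let φ : A ⊕ B → N be an R-linear map with kernel P. Then P = (P ∩ A) ⊕ (P ∩ B). -/
theorem stmt_8 (R : Type*) [CommRing R] (A B N : Type*)
    [AddCommGroup A] [AddCommGroup B] [AddCommGroup N]
    [Module R A] [Module R B] [Module R N] [NoZeroSMulDivisors ℤ N]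
    (a b f g : R) (c : ℤ) (hc : c ≠ 0)
    (ha : ∀ x : A, a • x = 0) (hb : ∀ y : B, b • y = 0)
    (hfg : f * a + g * b = (c : R))
    (φ : (A × B) →ₗ[R] N) :
    ∀ x : A, ∀ y : B,
      ((x, y) ∈ LinearMap.ker φ ↔
        ((x, (0 : B)) ∈ LinearMap.ker φ ∧ ((0 : A), y) ∈ LinearMap.ker φ)) := by
  intro x y
  simp only [LinearMap.mem_ker]
  constructor
  · intro h
    have key : (c : R) • ((x, (0 : B)) : A × B) = (g * b) • ((x, y) : A × B) := by
      rw [← hfg]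
      apply Prod.ext
      · simp [add_smul, mul_smul, ha x]
      · simp [mul_smul, hb y]
    have hx0 : φ (x, 0) = 0 := by
      have h1 : (c : R) • φ (x, 0) = 0 := by
        rw [← map_smul, key, map_smul, h, smul_zero]
      rw [Int.cast_smul_eq_zsmul] at h1
      exact (smul_eq_zero.mp h1).resolve_left hc
    refine ⟨hx0, ?_⟩
    have : ((x, y) : A × B) = (x, 0) + (0, y) := by simp
    rw [this, map_add, hx0, zero_add] at h
    exact h
  · rintro ⟨h1, h2⟩
    have : ((x, y) : A × B) = (x, 0) + (0, y) := by simp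
    rw [this, map_add, h1, h2, zero_add]
end

section
/- Let G be a finite abelian group with a nonsingular symmetric bilinear form λ : G × G → Q/Z, and suppose G = A ⊕ B is an orthogonal direct sum with gcd(|A|, |B|) = 1. If P ⊆ G is a metabolizer (P = P^⊥), then P = (P ∩ A) ⊕ (P ∩ B), and P ∩ A and P ∩ B are metabolizers of the restricted forms on A and B respectively. -/
theorem stmt_11 (G : Type*) [AddCommGroup G] [Finite G]
    (l : G →+ G →+ AddCircle (1 : ℚ))
    (hsymm : ∀ x y : G, l x y = l y x)
    (hnonsing : Function.Bijective fun g : G => l g)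
    (A B : AddSubgroup G) (hsup : A ⊔ B = ⊤) (hinf : A ⊓ B = ⊥)
    (horth : ∀ a ∈ A, ∀ b ∈ B, l a b = 0)
    (hcop : Nat.gcd (Nat.card A) (Nat.card B) = 1)
    (P : AddSubgroup G)
    (hmet : ∀ g : G, g ∈ P ↔ ∀ p ∈ P, l g p = 0) :
    P = (P ⊓ A) ⊔ (P ⊓ B) ∧
    (∀ a ∈ A, (a ∈ P ⊓ A ↔ ∀ x ∈ P ⊓ A, l a x = 0)) ∧
    (∀ b ∈ B, (b ∈ P ⊓ B ↔ ∀ x ∈ P ⊓ B, l b x = 0)) := by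
  set n := Nat.card A with hn
  set m := Nat.card B with hm
  have hA0 : ∀ a ∈ A, (n : ℤ) • a = 0 := by
    intro a ha
    have h : n • (⟨a, ha⟩ : A) = 0 := card_nsmul_eq_zero'
    have := congrArg (Subtype.val) h
    simpa using this
  have hB0 : ∀ b ∈ B, (m : ℤ) • b = 0 := by
    intro b hb
    have h : m • (⟨b, hb⟩ : B) = 0 := card_nsmul_eq_zero'
    have := congrArg (Subtype.val) h
    simpa using this
  have key : ∀ g ∈ P, ∃ a, a ∈ P ⊓ A ∧ ∃ b, b ∈ P ⊓ B ∧ a + b = g := by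
    intro g hg
    have hg' : g ∈ A ⊔ B := by rw [hsup]; trivial
    obtain ⟨a, ha, b, hb, hab⟩ := AddSubgroup.mem_sup.mp hg'
    have hnb : (n : ℤ) • b ∈ P := by
      have heq : (n : ℤ) • g = (n : ℤ) • b := by
        rw [← hab, smul_add, hA0 a ha, zero_add]
      have := P.zsmul_mem hg (n : ℤ)
      rwa [heq] at this
    have hbP : b ∈ P := by
      have h1 : (1 : ℤ) = n * Nat.gcdA n m + m * Nat.gcdB n m := by
        have := Nat.gcd_eq_gcd_ab n m
        rw [hcop] at this
        exact_mod_cast this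
      have : b = Nat.gcdA n m • ((n : ℤ) • b) + Nat.gcdB n m • ((m : ℤ) • b) := by
        rw [← mul_zsmul, ← mul_zsmul, ← add_zsmul, mul_comm, mul_comm (Nat.gcdB n m),
          ← h1, one_zsmul]
      rw [this, hB0 b hb, smul_zero, add_zero]
      exact P.zsmul_mem hnb _
    have haP : a ∈ P := by
      have := P.sub_mem hg hbP
      rw [← hab, add_sub_cancel_right] at this
      exact this
    exact ⟨a, ⟨haP, ha⟩, b, ⟨hbP, hb⟩, hab⟩
  refine ⟨?_, ?_, ?_⟩
  · apply le_antisymm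
    · intro g hg
      obtain ⟨a, haPA, b, hbPB, hab⟩ := key g hg
      rw [← hab]
      exact AddSubgroup.add_mem_sup haPA hbPB
    · exact sup_le inf_le_left inf_le_left
  · intro a haA
    constructor
    · rintro ⟨haP, -⟩ x ⟨hxP, -⟩
      exact (hmet a).mp haP x hxP
    · intro h
      refine ⟨(hmet a).mpr ?_, haA⟩
      intro p hp
      obtain ⟨x, hx, y, hy, hxy⟩ := key p hp
      rw [← hxy, map_add, h x hx, horth a haA y hy.2, add_zero]
  · intro b hbB
    constructor
    · rintro ⟨hbP, -⟩ x ⟨hxP, -⟩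
      exact (hmet b).mp hbP x hxP
    · intro h
      refine ⟨(hmet b).mpr ?_, hbB⟩
      intro p hp
      obtain ⟨x, hx, y, hy, hxy⟩ := key p hp
      have h2 : l b x = 0 := by rw [hsymm]; exact horth x hx.2 b hbB
      rw [← hxy, map_add, h2, h y hy, add_zero]
end
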